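/- Let D be a finite type and let a_i, b_i ⊆ D for i ∈ Fin L with L ≥ 1, indices taken cyclically (index L + 1 ≡ 1), such that every a_i is nonempty and a_i ∩ b_i = ∅. If b_{i+1} ⊆ a_i ∪ b_i for every i (a permissible updating cycle), then it cannot be that b_{i+1} = a_i ∪ b_i for all i; that is, there exists some i with (a_i ∪ b_i) \ b_{i+1} ≠ ∅. -/

import Mathlib

/-- **A permissible updating cycle cannot have `b_{i+1} = a_i ∪ b_i` for all `i`.**
Let `a i, b i ⊆ D` for `i ∈ Fin L` (indices cyclic, `L ≥ 1`), with every `a i`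
nonempty and `a i ∩ b i = ∅`.  If `b (i+1) ⊆ a i ∪ b i` for every `i` (a
permissible updating cycle), then there is some `i` with
`(a i ∪ b i) \ b (i + 1) ≠ ∅`. -/
theorem exists_strict_step_of_permissible_cycle
    {D : Type*} [Fintype D] [DecidableEq D]
    {L : ℕ} [NeZero L] (a b : Fin L → Finset D)
    (ha : ∀ i, (a i).Nonempty)
    (hdisj : ∀ i, Disjoint (a i) (b i))
    (hcyc : ∀ i, b (i + 1) ⊆ a i ∪ b i) :
    ∃ i : Fin L, ((a i ∪ b i) \ b (i + 1)).Nonempty := by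
  by_contra h
  push_neg at h
  have heq : ∀ i, b (i + 1) = a i ∪ b i := by
    intro i
    apply Finset.Subset.antisymm (hcyc i)
    intro x hx
    by_contra hxb
    exact (Finset.not_nonempty_iff_eq_empty.mpr (h i)) ⟨x, Finset.mem_sdiff.mpr ⟨hx, hxb⟩⟩
  have hlt : ∀ i : Fin L, (b i).card < (b (i + 1)).card := by
    intro i
    rw [heq i, Finset.card_union_of_disjoint (hdisj i)]
    have := (ha i).card_pos
    omega
  open Fin.NatCast in
  have key : ∀ n : ℕ, (b 0).card + n ≤ (b ((0 : Fin L) + n)).card := by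
    intro n
    induction n with
    | zero => simp
    | succ k ih =>
      have := hlt ((0 : Fin L) + k)
      have e : ((0 : Fin L) + ((k : ℕ) + 1 : ℕ)) = ((0 : Fin L) + k) + 1 := by
        push_cast; rw [add_assoc]
      rw [e]
      omega
  have hL := key L
  open Fin.NatCast in
  have : ((0 : Fin L) + (L : Fin L)) = 0 := by simp
  rw [this] at hL
  have : 0 < L := Nat.pos_of_ne_zero (NeZero.ne L)
  omega
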